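/- Define N(λ,l) = 2λ(√λ+1)(√(λ+l²)+√(1+l²)) · F₂(λ,l)/(G₀ c_B), i.e. N(λ,l) = 2√λ[ (√λ − l)(√(λ+l²) + √(1+l²)) + (l − √(λ+l²))(√λ + 1) ]. For 0 < l < √λ ≤ 1, the partial derivative ∂N/∂l is strictly negative. -/

import Mathlib

theorem stmt_8 (lam : ℝ) (hlam : 0 < lam) (hlam1 : lam ≤ 1)
    (N : ℝ → ℝ)
    (hN : ∀ l, N l = 2 * Real.sqrt lam *
      ((Real.sqrt lam - l) * (Real.sqrt (lam + l ^ 2) + Real.sqrt (1 + l ^ 2)) +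
       (l - Real.sqrt (lam + l ^ 2)) * (Real.sqrt lam + 1)))
    (l : ℝ) (hl : 0 < l) (hl2 : l < Real.sqrt lam) :
    deriv N l < 0 := by
  have hlam' : (0:ℝ) ≤ lam := hlam.le
  set s := Real.sqrt lam with hs
  set A := Real.sqrt (lam + l ^ 2) with hA
  set B := Real.sqrt (1 + l ^ 2) with hB
  have hs0 : 0 < s := Real.sqrt_pos.mpr hlam
  have hs2 : s ^ 2 = lam := Real.sq_sqrt hlam'
  have hs1 : s ≤ 1 := by
    have : s ≤ Real.sqrt 1 := Real.sqrt_le_sqrt hlam1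
    simpa using this
  have hApos : 0 < A := Real.sqrt_pos.mpr (by positivity)
  have hBpos : 0 < B := Real.sqrt_pos.mpr (by positivity)
  have hA2 : A ^ 2 = lam + l ^ 2 := Real.sq_sqrt (by positivity)
  have hB2 : B ^ 2 = 1 + l ^ 2 := Real.sq_sqrt (by positivity)
  have hAs : s < A := by
    have h := Real.sqrt_lt_sqrt hlam' (by nlinarith : lam < lam + l ^ 2)
    simpa [hs, hA] using h
  have hAle : A ≤ s + l := by nlinarith [hA2, hs2, hApos, mul_pos hs0 hl]
  have hB1 : 1 ≤ B := by nlinarith [hB2, hBpos, sq_nonneg l]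
  -- derivative of the square-root pieces
  have hfA : HasDerivAt (fun x : ℝ => Real.sqrt (lam + x ^ 2)) (l / A) l := by
    have h1 : HasDerivAt (fun x : ℝ => lam + x ^ 2) (2 * l) l := by
      simpa using ((hasDerivAt_pow 2 l).const_add lam)
    have h2 := (Real.hasDerivAt_sqrt (by positivity : lam + l ^ 2 ≠ 0)).comp l h1
    refine h2.congr_deriv ?_
    rw [← hA]
    field_simp
  have hfB : HasDerivAt (fun x : ℝ => Real.sqrt (1 + x ^ 2)) (l / B) l := by
    have h1 : HasDerivAt (fun x : ℝ => 1 + x ^ 2) (2 * l) l := by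
      simpa using ((hasDerivAt_pow 2 l).const_add 1)
    have h2 := (Real.hasDerivAt_sqrt (by positivity : 1 + l ^ 2 ≠ 0)).comp l h1
    refine h2.congr_deriv ?_
    rw [← hB]
    field_simp
  have g1 : HasDerivAt (fun x : ℝ => s - x) (-1) l := by
    simpa using (hasDerivAt_id l).const_sub s
  have g2 := hfA.add hfB
  have g3 := g1.mul g2
  have g4 := (hasDerivAt_id l).sub hfA
  have g5 := g4.mul_const (s + 1)
  have g6 := (g3.add g5).const_mul (2 * s)
  have hNe : N = fun x : ℝ => 2 * s *
      ((s - x) * (Real.sqrt (lam + x ^ 2) + Real.sqrt (1 + x ^ 2)) +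
       (x - Real.sqrt (lam + x ^ 2)) * (s + 1)) := funext hN
  have hD : deriv N l = 2 * s *
      ((-1) * (A + B) + (s - l) * (l / A + l / B) + (1 - l / A) * (s + 1)) := by
    rw [hNe]
    exact g6.deriv
  rw [hD]
  apply mul_neg_of_pos_of_neg (by positivity)
  have heq : (-1) * (A + B) + (s - l) * (l / A + l / B) + (1 - l / A) * (s + 1)
      = ((s - A) * (A * B) + (1 - B) * (A * B) + (s - l) * l * A - l * (l + 1) * B) / (A * B) := by
    field_simp
    ring
  rw [heq]
  apply div_neg_of_neg_of_pos _ (by positivity)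
  have t1 : (s - A) * (A * B) < 0 :=
    mul_neg_of_neg_of_pos (by linarith) (by positivity)
  have t2 : (1 - B) * (A * B) ≤ 0 :=
    mul_nonpos_of_nonpos_of_nonneg (by linarith) (by positivity)
  have t3 : (s - l) * l * A ≤ l * (l + 1) * B := by
    nlinarith [mul_nonneg (mul_nonneg (sub_nonneg.mpr hl2.le) hl.le) (sub_nonneg.mpr hAle),
      mul_nonneg hl.le (sub_nonneg.mpr hlam1),
      mul_nonneg (mul_nonneg hl.le (by linarith : (0:ℝ) ≤ l + 1)) (sub_nonneg.mpr hB1),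
      hs2]
  linarith
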